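/- Let P⁺ and P⁻ be finite sets of propositional variables and let M0 and M1 be finite Kripke models with worlds x0, x1 such that x0 R0 y for every world y of M0 and x1 R1 y for every world y of M1. If (M0,x0) →₃^{(P⁺,P⁻)} (M1,x1), then (1) for every cluster C0 of final worlds of M0 there exists a cluster C1 of final worlds of M1 such that C0 matches C1, and (2) for every cluster C1 of final worlds of M1 there exists a cluster C0 of final worlds of M0 such that C0 matches C1. -/

import Mathlib

/-- Modal formulas over countably many variables. -/
inductive ModalForm : Type where
  | var : ℕ → ModalForm
  | bot : ModalForm
  | and : ModalForm → ModalForm → ModalForm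
  | or : ModalForm → ModalForm → ModalForm
  | not : ModalForm → ModalForm
  | imp : ModalForm → ModalForm → ModalForm
  | box : ModalForm → ModalForm

namespace ModalForm

mutual
  /-- positively occurring variables -/
  def vpos : ModalForm → Finset ℕ
    | var p => {p}
    | bot => ∅
    | and φ ψ => vpos φ ∪ vpos ψ
    | or φ ψ => vpos φ ∪ vpos ψ
    | not φ => vneg φ
    | imp φ ψ => vneg φ ∪ vpos ψ
    | box φ => vpos φ
  /-- negatively occurring variables -/
  def vneg : ModalForm → Finset ℕ
    | var _ => ∅
    | bot => ∅
    | and φ ψ => vneg φ ∪ vneg ψ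
    | or φ ψ => vneg φ ∪ vneg ψ
    | not φ => vpos φ
    | imp φ ψ => vpos φ ∪ vneg ψ
    | box φ => vneg φ
end

/-- Modal depth: maximal nesting of `□`. -/
def depth : ModalForm → ℕ
  | var _ => 0
  | bot => 0
  | and φ ψ => max (depth φ) (depth ψ)
  | or φ ψ => max (depth φ) (depth ψ)
  | not φ => depth φ
  | imp φ ψ => max (depth φ) (depth ψ)
  | box φ => depth φ + 1

/-- `◇φ := ¬□¬φ` -/
def dia (φ : ModalForm) : ModalForm := not (box (not φ))

/-- `⊤ := ¬⊥` -/
def top : ModalForm := not bot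

end ModalForm

/-- An S4 Kripke frame: nonempty set of worlds with a reflexive transitive relation. -/
structure KFrame : Type 1 where
  W : Type
  R : W → W → Prop
  nonempty : Nonempty W
  refl : ∀ x, R x x
  trans : ∀ x y z, R x y → R y z → R x z

/-- A Kripke model: a frame with a valuation. -/
structure KModel : Type 1 extends KFrame where
  val : W → ℕ → Prop

/-- The model based on frame `F` with valuation `V`. -/
def KFrame.toModel (F : KFrame) (V : F.W → ℕ → Prop) : KModel :=
  { toKFrame := F, val := V }

/-- Satisfaction in a Kripke model. -/
def KModel.Sat (M : KModel) : M.W → ModalForm → Prop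
  | w, .var p => M.val w p
  | _, .bot => False
  | w, .and φ ψ => M.Sat w φ ∧ M.Sat w ψ
  | w, .or φ ψ => M.Sat w φ ∨ M.Sat w ψ
  | w, .not φ => ¬ M.Sat w φ
  | w, .imp φ ψ => M.Sat w φ → M.Sat w ψ
  | w, .box φ => ∀ y, M.R w y → M.Sat y φ

/-- `(M0,w0) →ₙ^{(P⁺,P⁻)} (M1,w1)`: every `(P⁺,P⁻)`-formula of depth ≤ n
satisfied at `(M0,w0)` is satisfied at `(M1,w1)`. -/
def ModalArrow (Pp Pm : Finset ℕ) (n : ℕ) (M0 : KModel) (w0 : M0.W)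
    (M1 : KModel) (w1 : M1.W) : Prop :=
  ∀ φ : ModalForm, φ.vpos ⊆ Pp → φ.vneg ⊆ Pm → φ.depth ≤ n →
    M0.Sat w0 φ → M1.Sat w1 φ

/-- p-morphism between frames. -/
def PMorphism (F G : KFrame) (f : F.W → G.W) : Prop :=
  (∀ x y, F.R x y → G.R (f x) (f y)) ∧
  (∀ x w, G.R (f x) w → ∃ z, F.R x z ∧ f z = w)

/-- The class `C` of Kripke models enjoys `n`-IP. -/
def EnjoysIP (C : Set KModel) (n : ℕ) : Prop :=
  ∀ (Pp Pm : Finset ℕ) (M0 M1 : KModel), M0 ∈ C → M1 ∈ C →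
    ∀ (w0 : M0.W) (w1 : M1.W), ModalArrow Pp Pm n M0 w0 M1 w1 →
      ∃ (F : KFrame) (wstar : F.W) (f0 : F.W → M0.W) (f1 : F.W → M1.W),
        (∀ V : F.W → ℕ → Prop, F.toModel V ∈ C) ∧
        PMorphism F M0.toKFrame f0 ∧
        PMorphism F M1.toKFrame f1 ∧
        f0 wstar = w0 ∧ f1 wstar = w1 ∧
        ∀ x : F.W, ModalArrow Pp Pm 0 M0 (f0 x) M1 (f1 x)

/-- A world is final iff every successor is also a predecessor. -/
def KModel.Final (M : KModel) (w : M.W) : Prop := ∀ y, M.R w y → M.R y w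

/-- The cluster of a world. -/
def KModel.cluster (M : KModel) (w : M.W) : Set M.W := {u | M.R w u ∧ M.R u w}

/-- Cluster `C0` of `M0` matches cluster `C1` of `M1`. -/
def Matches (Pp Pm : Finset ℕ) (M0 M1 : KModel) (C0 : Set M0.W) (C1 : Set M1.W) : Prop :=
  (∀ u0 ∈ C0, ∃ u1 ∈ C1, ModalArrow Pp Pm 0 M0 u0 M1 u1) ∧
  (∀ u1 ∈ C1, ∃ u0 ∈ C0, ModalArrow Pp Pm 0 M0 u0 M1 u1)

/-- `φ` is satisfied at every world of every model in `C`. -/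
def ValidOn (C : Set KModel) (φ : ModalForm) : Prop :=
  ∀ M ∈ C, ∀ w : M.W, M.Sat w φ

namespace Stmt6Aux

open ModalForm Classical

/-- Conjunction of a list of formulas. -/
def conjL : List ModalForm → ModalForm
  | [] => .not .bot
  | φ :: l => .and φ (conjL l)

/-- Disjunction of a list of formulas. -/
def disjL : List ModalForm → ModalForm
  | [] => .bot
  | φ :: l => .or φ (disjL l)

lemma conjL_vpos {L : List ModalForm} {S : Finset ℕ} (h : ∀ φ ∈ L, φ.vpos ⊆ S) :
    (conjL L).vpos ⊆ S := by
  induction L with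
  | nil => simp [conjL, vpos, vneg]
  | cons φ l ih =>
      simp only [conjL, vpos, Finset.union_subset_iff]
      exact ⟨h φ (by simp), ih fun ψ hψ => h ψ (by simp [hψ])⟩

lemma conjL_vneg {L : List ModalForm} {S : Finset ℕ} (h : ∀ φ ∈ L, φ.vneg ⊆ S) :
    (conjL L).vneg ⊆ S := by
  induction L with
  | nil => simp [conjL, vpos, vneg]
  | cons φ l ih =>
      simp only [conjL, vneg, Finset.union_subset_iff]
      exact ⟨h φ (by simp), ih fun ψ hψ => h ψ (by simp [hψ])⟩

lemma conjL_depth {L : List ModalForm} {n : ℕ} (h : ∀ φ ∈ L, φ.depth ≤ n) :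
    (conjL L).depth ≤ n := by
  induction L with
  | nil => simp [conjL, depth]
  | cons φ l ih =>
      simp only [conjL, depth, max_le_iff]
      exact ⟨h φ (by simp), ih fun ψ hψ => h ψ (by simp [hψ])⟩

lemma conjL_sat {M : KModel} {w : M.W} {L : List ModalForm} :
    M.Sat w (conjL L) ↔ ∀ φ ∈ L, M.Sat w φ := by
  induction L with
  | nil => simp [conjL, KModel.Sat]
  | cons φ l ih => simp [conjL, KModel.Sat, ih]

lemma disjL_vpos {L : List ModalForm} {S : Finset ℕ} (h : ∀ φ ∈ L, φ.vpos ⊆ S) :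
    (disjL L).vpos ⊆ S := by
  induction L with
  | nil => simp [disjL, vpos]
  | cons φ l ih =>
      simp only [disjL, vpos, Finset.union_subset_iff]
      exact ⟨h φ (by simp), ih fun ψ hψ => h ψ (by simp [hψ])⟩

lemma disjL_vneg {L : List ModalForm} {S : Finset ℕ} (h : ∀ φ ∈ L, φ.vneg ⊆ S) :
    (disjL L).vneg ⊆ S := by
  induction L with
  | nil => simp [disjL, vneg]
  | cons φ l ih =>
      simp only [disjL, vneg, Finset.union_subset_iff]
      exact ⟨h φ (by simp), ih fun ψ hψ => h ψ (by simp [hψ])⟩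

lemma disjL_depth {L : List ModalForm} {n : ℕ} (h : ∀ φ ∈ L, φ.depth ≤ n) :
    (disjL L).depth ≤ n := by
  induction L with
  | nil => simp [disjL, depth]
  | cons φ l ih =>
      simp only [disjL, depth, max_le_iff]
      exact ⟨h φ (by simp), ih fun ψ hψ => h ψ (by simp [hψ])⟩

lemma disjL_sat {M : KModel} {w : M.W} {L : List ModalForm} :
    M.Sat w (disjL L) ↔ ∃ φ ∈ L, M.Sat w φ := by
  induction L with
  | nil => simp [disjL, KModel.Sat]
  | cons φ l ih => simp [disjL, KModel.Sat, ih]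

lemma dia_vpos (φ : ModalForm) : (dia φ).vpos = φ.vpos := by
  simp [dia, vpos, vneg]

lemma dia_vneg (φ : ModalForm) : (dia φ).vneg = φ.vneg := by
  simp [dia, vpos, vneg]

lemma dia_depth (φ : ModalForm) : (dia φ).depth = φ.depth + 1 := by
  simp [dia, depth]

lemma dia_sat {M : KModel} {w : M.W} {φ : ModalForm} :
    M.Sat w (dia φ) ↔ ∃ y, M.R w y ∧ M.Sat y φ := by
  simp only [dia, KModel.Sat]
  push_neg
  rfl

/-- Characteristic depth-0 formula of a valuation. -/
noncomputable def chi (P Q : Finset ℕ) (V : ℕ → Prop) : ModalForm :=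
  .and (conjL (((P.filter (fun p => V p)).toList).map .var))
       (conjL (((Q.filter (fun p => ¬ V p)).toList).map (fun p => .not (.var p))))

lemma chi_vpos (P Q : Finset ℕ) (V : ℕ → Prop) : (chi P Q V).vpos ⊆ P := by
  simp only [chi, vpos, Finset.union_subset_iff]
  constructor
  · apply conjL_vpos
    intro φ hφ
    simp only [List.mem_map, Finset.mem_toList, Finset.mem_filter] at hφ
    obtain ⟨p, ⟨hp, _⟩, rfl⟩ := hφ
    simp [vpos, Finset.singleton_subset_iff, hp]
  · apply conjL_vpos
    intro φ hφ
    simp only [List.mem_map, Finset.mem_toList, Finset.mem_filter] at hφ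
    obtain ⟨p, _, rfl⟩ := hφ
    simp [vpos, vneg]

lemma chi_vneg (P Q : Finset ℕ) (V : ℕ → Prop) : (chi P Q V).vneg ⊆ Q := by
  simp only [chi, vneg, Finset.union_subset_iff]
  constructor
  · apply conjL_vneg
    intro φ hφ
    simp only [List.mem_map, Finset.mem_toList, Finset.mem_filter] at hφ
    obtain ⟨p, _, rfl⟩ := hφ
    simp [vneg]
  · apply conjL_vneg
    intro φ hφ
    simp only [List.mem_map, Finset.mem_toList, Finset.mem_filter] at hφ
    obtain ⟨p, ⟨hp, _⟩, rfl⟩ := hφ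
    simp [vpos, vneg, Finset.singleton_subset_iff, hp]

lemma chi_depth (P Q : Finset ℕ) (V : ℕ → Prop) : (chi P Q V).depth = 0 := by
  have : (chi P Q V).depth ≤ 0 := by
    simp only [chi, depth, max_le_iff]
    constructor
    · apply conjL_depth; intro φ hφ
      simp only [List.mem_map] at hφ
      obtain ⟨p, _, rfl⟩ := hφ; simp [depth]
    · apply conjL_depth; intro φ hφ
      simp only [List.mem_map] at hφ
      obtain ⟨p, _, rfl⟩ := hφ; simp [depth]
  omega

lemma chi_sat {M : KModel} {w : M.W} {P Q : Finset ℕ} {V : ℕ → Prop} :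
    M.Sat w (chi P Q V) ↔
      (∀ p ∈ P, V p → M.val w p) ∧ (∀ p ∈ Q, M.val w p → V p) := by
  simp only [chi, KModel.Sat, conjL_sat]
  constructor
  · rintro ⟨h1, h2⟩
    constructor
    · intro p hp hv
      have := h1 (.var p) (by simp [Finset.mem_toList, hp, hv])
      exact this
    · intro p hp hv
      by_contra hnv
      have := h2 (.not (.var p)) (by simp [Finset.mem_toList, hp, hnv])
      exact this hv
  · rintro ⟨h1, h2⟩
    constructor
    · intro φ hφ
      simp only [List.mem_map, Finset.mem_toList, Finset.mem_filter] at hφ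
      obtain ⟨p, ⟨hp, hv⟩, rfl⟩ := hφ
      exact h1 p hp hv
    · intro φ hφ
      simp only [List.mem_map, Finset.mem_toList, Finset.mem_filter] at hφ
      obtain ⟨p, ⟨hp, hv⟩, rfl⟩ := hφ
      show ¬ M.val w p
      exact fun hc => hv (h2 p hp hc)

/-- Monotone transfer for depth-0 formulas, in both polarities simultaneously. -/
lemma mono (M0 M1 : KModel) (v0 : M0.W) (v1 : M1.W) (Pp Pm : Finset ℕ)
    (h1 : ∀ p ∈ Pp, M0.val v0 p → M1.val v1 p)
    (h2 : ∀ p ∈ Pm, M1.val v1 p → M0.val v0 p) :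
    ∀ φ : ModalForm, φ.depth ≤ 0 →
      ((φ.vpos ⊆ Pp → φ.vneg ⊆ Pm → M0.Sat v0 φ → M1.Sat v1 φ) ∧
       (φ.vpos ⊆ Pm → φ.vneg ⊆ Pp → M1.Sat v1 φ → M0.Sat v0 φ)) := by
  intro φ
  induction φ with
  | var p =>
      intro _
      constructor
      · intro hp _ hs
        exact h1 p (by simpa [vpos, Finset.singleton_subset_iff] using hp) hs
      · intro hp _ hs
        exact h2 p (by simpa [vpos, Finset.singleton_subset_iff] using hp) hs
  | bot => intro _; exact ⟨fun _ _ hs => hs.elim, fun _ _ hs => hs.elim⟩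
  | and φ ψ ihφ ihψ =>
      intro hd
      simp only [depth, max_le_iff] at hd
      simp only [vpos, vneg, Finset.union_subset_iff] at *
      constructor
      · rintro ⟨hp1, hp2⟩ ⟨hn1, hn2⟩ ⟨hs1, hs2⟩
        exact ⟨(ihφ hd.1).1 hp1 hn1 hs1, (ihψ hd.2).1 hp2 hn2 hs2⟩
      · rintro ⟨hp1, hp2⟩ ⟨hn1, hn2⟩ ⟨hs1, hs2⟩
        exact ⟨(ihφ hd.1).2 hp1 hn1 hs1, (ihψ hd.2).2 hp2 hn2 hs2⟩
  | or φ ψ ihφ ihψ =>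
      intro hd
      simp only [depth, max_le_iff] at hd
      simp only [vpos, vneg, Finset.union_subset_iff] at *
      constructor
      · rintro ⟨hp1, hp2⟩ ⟨hn1, hn2⟩ hs
        exact hs.imp ((ihφ hd.1).1 hp1 hn1) ((ihψ hd.2).1 hp2 hn2)
      · rintro ⟨hp1, hp2⟩ ⟨hn1, hn2⟩ hs
        exact hs.imp ((ihφ hd.1).2 hp1 hn1) ((ihψ hd.2).2 hp2 hn2)
  | not φ ihφ =>
      intro hd
      simp only [depth] at hd
      simp only [vpos, vneg] at *
      constructor
      · intro hp hn hs hc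
        exact hs ((ihφ hd).2 hn hp hc)
      · intro hp hn hs hc
        exact hs ((ihφ hd).1 hn hp hc)
  | imp φ ψ ihφ ihψ =>
      intro hd
      simp only [depth, max_le_iff] at hd
      simp only [vpos, vneg, Finset.union_subset_iff] at *
      constructor
      · rintro ⟨hp1, hp2⟩ ⟨hn1, hn2⟩ hs hc
        exact (ihψ hd.2).1 hp2 hn2 (hs ((ihφ hd.1).2 hn1 hp1 hc))
      · rintro ⟨hp1, hp2⟩ ⟨hn1, hn2⟩ hs hc
        exact (ihψ hd.2).2 hp2 hn2 (hs ((ihφ hd.1).1 hn1 hp1 hc))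
  | box φ ihφ =>
      intro hd
      simp [depth] at hd

/-- depth-0 arrow characterization. -/
lemma arrow0_iff {Pp Pm : Finset ℕ} {M0 M1 : KModel} {v0 : M0.W} {v1 : M1.W} :
    ModalArrow Pp Pm 0 M0 v0 M1 v1 ↔
      ((∀ p ∈ Pp, M0.val v0 p → M1.val v1 p) ∧ (∀ p ∈ Pm, M1.val v1 p → M0.val v0 p)) := by
  constructor
  · intro h
    constructor
    · intro p hp hv
      exact h (.var p) (by simp [vpos, Finset.singleton_subset_iff, hp])
        (by simp [vneg]) (by simp [depth]) hv
    · intro p hp hv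
      by_contra hc
      exact h (.not (.var p)) (by simp [vpos, vneg])
        (by simp [vneg, vpos, Finset.singleton_subset_iff, hp]) (by simp [depth]) hc hv
  · rintro ⟨h1, h2⟩ φ hp hn hd hs
    exact (mono M0 M1 v0 v1 Pp Pm h1 h2 φ hd).1 hp hn hs

lemma arrow0_iff_chi {Pp Pm : Finset ℕ} {M0 M1 : KModel} {v0 : M0.W} {v1 : M1.W} :
    ModalArrow Pp Pm 0 M0 v0 M1 v1 ↔ M1.Sat v1 (chi Pp Pm (M0.val v0)) := by
  rw [arrow0_iff, chi_sat]

/-- Every world in a finite S4 model sees a final world. -/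
lemma exists_final (M : KModel) (hf : Finite M.W) (w : M.W) :
    ∃ u, M.R w u ∧ M.Final u := by
  classical
  have := Fintype.ofFinite M.W
  let f : M.W → ℕ := fun w => (Finset.univ.filter (fun y => M.R w y)).card
  suffices H : ∀ n (w : M.W), f w ≤ n → ∃ u, M.R w u ∧ M.Final u from H (f w) w le_rfl
  intro n
  induction n with
  | zero =>
      intro w hw
      exfalso
      have : w ∈ Finset.univ.filter (fun y => M.R w y) := by
        simp [M.refl w]
      have : 0 < f w := Finset.card_pos.mpr ⟨w, this⟩
      omega
  | succ n ih =>
      intro w hw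
      by_cases hfin : M.Final w
      · exact ⟨w, M.refl w, hfin⟩
      · simp only [KModel.Final, not_forall] at hfin
        obtain ⟨y, hwy, hyw⟩ := hfin
        have hsub : Finset.univ.filter (fun z => M.R y z) ⊂
            Finset.univ.filter (fun z => M.R w z) := by
          constructor
          · intro z hz
            simp only [Finset.mem_filter, Finset.mem_univ, true_and] at *
            exact M.trans _ _ _ hwy hz
          · intro hc
            have : w ∈ Finset.univ.filter (fun z => M.R y z) :=
              hc (by simp [M.refl w])
            simp only [Finset.mem_filter, Finset.mem_univ, true_and] at this
            exact hyw this
        have hlt : f y < f w := Finset.card_lt_card hsub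
        obtain ⟨u, hyu, hu⟩ := ih y (by omega)
        exact ⟨u, M.trans _ _ _ hwy hyu, hu⟩

/-- Key lemma: transfer of final clusters. -/
lemma key (P Q : Finset ℕ) (MA MB : KModel) (hfA : Finite MA.W) (hfB : Finite MB.W)
    (xA : MA.W) (xB : MB.W) (hA : ∀ y, MA.R xA y)
    (arr : ∀ φ : ModalForm, φ.vpos ⊆ P → φ.vneg ⊆ Q → φ.depth ≤ 3 →
      MA.Sat xA φ → MB.Sat xB φ)
    (uA : MA.W) (hfin : MA.Final uA) :
    ∃ uB : MB.W, MB.Final uB ∧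
      (∀ v ∈ MA.cluster uA, ∃ y ∈ MB.cluster uB, MB.Sat y (chi P Q (MA.val v))) ∧
      (∀ y ∈ MB.cluster uB, ∃ v ∈ MA.cluster uA, MB.Sat y (chi P Q (MA.val v))) := by
  classical
  have := Fintype.ofFinite MA.W
  -- the list of characteristic formulas of the cluster of uA
  set Cl : Finset MA.W := Finset.univ.filter (fun v => v ∈ MA.cluster uA) with hCl
  set L : List ModalForm := Cl.toList.map (fun v => chi P Q (MA.val v)) with hL
  have memL : ∀ φ, φ ∈ L ↔ ∃ v ∈ MA.cluster uA, φ = chi P Q (MA.val v) := by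
    intro φ
    simp [hL, hCl, List.mem_map, Finset.mem_toList, Finset.mem_filter, eq_comm]
  -- the formula
  set σ : ModalForm := .box (.and (disjL L) (conjL (L.map dia))) with hσ
  have hvpos : (dia σ).vpos ⊆ P := by
    rw [dia_vpos]
    simp only [hσ, vpos, Finset.union_subset_iff]
    constructor
    · apply disjL_vpos
      intro φ hφ
      obtain ⟨v, _, rfl⟩ := (memL φ).mp hφ
      exact chi_vpos _ _ _
    · apply conjL_vpos
      intro φ hφ
      simp only [List.mem_map] at hφ
      obtain ⟨ψ, hψ, rfl⟩ := hφ
      obtain ⟨v, _, rfl⟩ := (memL ψ).mp hψ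
      rw [dia_vpos]
      exact chi_vpos _ _ _
  have hvneg : (dia σ).vneg ⊆ Q := by
    rw [dia_vneg]
    simp only [hσ, vneg, Finset.union_subset_iff]
    constructor
    · apply disjL_vneg
      intro φ hφ
      obtain ⟨v, _, rfl⟩ := (memL φ).mp hφ
      exact chi_vneg _ _ _
    · apply conjL_vneg
      intro φ hφ
      simp only [List.mem_map] at hφ
      obtain ⟨ψ, hψ, rfl⟩ := hφ
      obtain ⟨v, _, rfl⟩ := (memL ψ).mp hψ
      rw [dia_vneg]
      exact chi_vneg _ _ _
  have hdepth : (dia σ).depth ≤ 3 := by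
    rw [dia_depth]
    have : σ.depth ≤ 2 := by
      simp only [hσ, depth]
      have h1 : (disjL L).depth ≤ 1 := by
        apply disjL_depth
        intro φ hφ
        obtain ⟨v, _, rfl⟩ := (memL φ).mp hφ
        simp [chi_depth]
      have h2 : (conjL (L.map dia)).depth ≤ 1 := by
        apply conjL_depth
        intro φ hφ
        simp only [List.mem_map] at hφ
        obtain ⟨ψ, hψ, rfl⟩ := hφ
        obtain ⟨v, _, rfl⟩ := (memL ψ).mp hψ
        rw [dia_depth, chi_depth]
      omega
    omega
  -- uA satisfies σ
  have hσA : MA.Sat uA σ := by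
    simp only [hσ]
    show ∀ y, MA.R uA y → _
    intro y hy
    have hycl : y ∈ MA.cluster uA := ⟨hy, hfin y hy⟩
    constructor
    · rw [disjL_sat]
      refine ⟨chi P Q (MA.val y), (memL _).mpr ⟨y, hycl, rfl⟩, ?_⟩
      rw [chi_sat]
      exact ⟨fun p _ hp => hp, fun p _ hp => hp⟩
    · rw [conjL_sat]
      intro φ hφ
      simp only [List.mem_map] at hφ
      obtain ⟨ψ, hψ, rfl⟩ := hφ
      obtain ⟨v, hvcl, rfl⟩ := (memL ψ).mp hψ
      rw [dia_sat]
      refine ⟨v, MA.trans _ _ _ hycl.2 hvcl.1, ?_⟩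
      rw [chi_sat]
      exact ⟨fun p _ hp => hp, fun p _ hp => hp⟩
  -- xA satisfies ◇σ
  have hdiaA : MA.Sat xA (dia σ) := dia_sat.mpr ⟨uA, hA uA, hσA⟩
  -- transfer
  have hdiaB : MB.Sat xB (dia σ) := arr _ hvpos hvneg hdepth hdiaA
  rw [dia_sat] at hdiaB
  obtain ⟨wB, hxw, hwσ⟩ := hdiaB
  obtain ⟨uB, hwu, huB⟩ := exists_final MB hfB wB
  refine ⟨uB, huB, ?_, ?_⟩
  · -- every v in cluster uA is realized in cluster uB
    intro v hv
    have huB' := hwσ uB hwu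
    have := huB'.2
    rw [conjL_sat] at this
    have hd := this (dia (chi P Q (MA.val v)))
      (List.mem_map.mpr ⟨_, (memL _).mpr ⟨v, hv, rfl⟩, rfl⟩)
    rw [dia_sat] at hd
    obtain ⟨y, huy, hy⟩ := hd
    exact ⟨y, ⟨huy, huB y huy⟩, hy⟩
  · -- every y in cluster uB realizes some v in cluster uA
    intro y hy
    have hwy : MB.R wB y := MB.trans _ _ _ hwu hy.1
    have := (hwσ y hwy).1
    rw [disjL_sat] at this
    obtain ⟨φ, hφ, hsy⟩ := this
    obtain ⟨v, hv, rfl⟩ := (memL φ).mp hφ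
    exact ⟨v, hv, hsy⟩

end Stmt6Aux


theorem stmt6 (Pp Pm : Finset ℕ) (M0 M1 : KModel)
    (hf0 : Finite M0.W) (hf1 : Finite M1.W)
    (x0 : M0.W) (x1 : M1.W)
    (h0 : ∀ y : M0.W, M0.R x0 y) (h1 : ∀ y : M1.W, M1.R x1 y)
    (h : ModalArrow Pp Pm 3 M0 x0 M1 x1) :
    (∀ u0 : M0.W, M0.Final u0 → ∃ u1 : M1.W, M1.Final u1 ∧
        Matches Pp Pm M0 M1 (M0.cluster u0) (M1.cluster u1)) ∧
    (∀ u1 : M1.W, M1.Final u1 → ∃ u0 : M0.W, M0.Final u0 ∧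
        Matches Pp Pm M0 M1 (M0.cluster u0) (M1.cluster u1)) := by
  classical
  have harr' : ∀ φ : ModalForm, φ.vpos ⊆ Pm → φ.vneg ⊆ Pp → φ.depth ≤ 3 →
      M1.Sat x1 φ → M0.Sat x0 φ := by
    intro φ hp hn hd hs
    by_contra hc
    exact h (.not φ) hn hp hd hc hs
  constructor
  · intro u0 hu0
    obtain ⟨u1, hu1, hm1, hm2⟩ := Stmt6Aux.key Pp Pm M0 M1 hf0 hf1 x0 x1 h0 h u0 hu0
    refine ⟨u1, hu1, ?_, ?_⟩
    · intro v hv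
      obtain ⟨y, hy, hs⟩ := hm1 v hv
      exact ⟨y, hy, Stmt6Aux.arrow0_iff_chi.mpr hs⟩
    · intro y hy
      obtain ⟨v, hv, hs⟩ := hm2 y hy
      exact ⟨v, hv, Stmt6Aux.arrow0_iff_chi.mpr hs⟩
  · intro u1 hu1
    obtain ⟨u0, hu0, hm1, hm2⟩ := Stmt6Aux.key Pm Pp M1 M0 hf1 hf0 x1 x0 h1 harr' u1 hu1
    have hiff : ∀ (y : M0.W) (v : M1.W),
        M0.Sat y (Stmt6Aux.chi Pm Pp (M1.val v)) ↔ ModalArrow Pp Pm 0 M0 y M1 v := by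
      intro y v
      rw [Stmt6Aux.arrow0_iff, Stmt6Aux.chi_sat]
      constructor
      · rintro ⟨a, b⟩; exact ⟨fun p hp => b p hp, fun p hp => a p hp⟩
      · rintro ⟨a, b⟩; exact ⟨fun p hp => b p hp, fun p hp => a p hp⟩
    refine ⟨u0, hu0, ?_, ?_⟩
    · intro y hy
      obtain ⟨v, hv, hs⟩ := hm2 y hy
      exact ⟨v, hv, (hiff y v).mp hs⟩
    · intro v hv
      obtain ⟨y, hy, hs⟩ := hm1 v hv
      exact ⟨y, hy, (hiff y v).mp hs⟩
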